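/- Let k ≥ 1 and let n be a natural number with n ≤ 2k. If S ⊆ ℤ^k is such that every x ∈ S has at most n neighbors in S (points of S at Euclidean distance 1 from x), then the upper density of S is at most 2k/(4k − n). Moreover, for k ≥ 2, if every x ∈ S has at most 1 neighbor in S then the upper density of S is at most 1/2, and this is attained: the checkerboard set {x ∈ ℤ^k : x₁ + ⋯ + x_k ≡ 0 (mod 2)} contains no two points at distance 1 and has density exactly 1/2. (Hence Δ_k(0) = Δ_k(1) = 1/2 for all k ≥ 2.) -/

import Mathlib

open Filter Topology

variable {k : ℕ}

/-- `y` is a neighbor of `x` in `ℤ^k`: they are at Euclidean distance 1. -/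
def IsNbrK {k : ℕ} (x y : Fin k → ℤ) : Prop :=
  ∑ i, (y i - x i) ^ 2 = 1

/-- The number of neighbors (points at distance 1) of `x` lying in `S ⊆ ℤ^k`. -/
noncomputable def nbrCountK {k : ℕ} (S : Set (Fin k → ℤ)) (x : Fin k → ℤ) : ℕ :=
  Set.ncard {y ∈ S | IsNbrK x y}

/-- The box `B_r = {x ∈ ℤ^k : |x_i| < r for all i}`. -/
def boxK (k : ℕ) (r : ℕ) : Set (Fin k → ℤ) :=
  {x | ∀ i, |x i| < (r : ℤ)}

/-- The upper density of `S ⊆ ℤ^k`: `limsup_{r → ∞} |S ∩ B_r| / (2r-1)^k`. -/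
noncomputable def upperDensityK {k : ℕ} (S : Set (Fin k → ℤ)) : ℝ :=
  limsup (fun r : ℕ => (Set.ncard (S ∩ boxK k r) : ℝ) / (2 * (r : ℝ) - 1) ^ k) atTop

/-- `S ⊆ ℤ^k` has density `d`. -/
def HasDensityK {k : ℕ} (S : Set (Fin k → ℤ)) (d : ℝ) : Prop :=
  Tendsto (fun r : ℕ => (Set.ncard (S ∩ boxK k r) : ℝ) / (2 * (r : ℝ) - 1) ^ k) atTop (𝓝 d)

/-- The checkerboard sublattice of `ℤ^k`: points with even coordinate sum. -/
def checkerK (k : ℕ) : Set (Fin k → ℤ) :=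
  {x | (2 : ℤ) ∣ ∑ i, x i}

namespace DK
open Finset
open scoped Classical

def uvec (k : ℕ) (i : Fin k) (b : Bool) : Fin k → ℤ := Pi.single i (if b then 1 else -1)

lemma uvec_apply (i : Fin k) (b : Bool) (j : Fin k) :
    uvec k i b j = if j = i then (if b then 1 else -1) else 0 := by
  simp [uvec, Pi.single_apply]

lemma isNbrK_iff {x y : Fin k → ℤ} : IsNbrK x y ↔ ∃ i b, y = x + uvec k i b := by
  constructor
  · intro h
    unfold IsNbrK at h
    have hex : ∃ i, y i - x i ≠ 0 := by
      by_contra hc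
      push_neg at hc
      simp only [hc, ne_eq] at h
      simp [hc] at h
    obtain ⟨i, hi⟩ := hex
    have h1 : 1 ≤ (y i - x i) ^ 2 := by
      have := Int.one_le_abs hi
      nlinarith [sq_abs (y i - x i)]
    have hsplit : ∑ j ∈ Finset.univ.erase i, (y j - x j) ^ 2 + (y i - x i) ^ 2 = 1 := by
      rw [Finset.sum_erase_add _ _ (Finset.mem_univ i)]; exact h
    have hz : ∀ j ∈ Finset.univ.erase i, (y j - x j) ^ 2 = 0 := by
      rw [← Finset.sum_eq_zero_iff_of_nonneg (fun j _ => sq_nonneg _)]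
      nlinarith [Finset.sum_nonneg (fun j (_ : j ∈ Finset.univ.erase i) => sq_nonneg (y j - x j))]
    have hsq : (y i - x i) ^ 2 = 1 := by
      have := Finset.sum_eq_zero hz
      omega
    have hval : y i - x i = 1 ∨ y i - x i = -1 := by
      have : IsUnit (y i - x i) := IsUnit.of_mul_eq_one (y i - x i) (by nlinarith)
      exact Int.isUnit_iff.mp this
    refine ⟨i, y i - x i = 1, ?_⟩
    funext j
    rcases eq_or_ne j i with rfl | hj
    · simp only [Pi.add_apply, uvec_apply, if_pos rfl]
      rcases hval with hv | hv <;> simp [hv] <;> omega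
    · have : (y j - x j) ^ 2 = 0 := hz j (by simp [hj])
      have : y j - x j = 0 := by nlinarith
      simp only [Pi.add_apply, uvec_apply, if_neg hj]
      omega
  · rintro ⟨i, b, rfl⟩
    unfold IsNbrK
    rw [Finset.sum_eq_single i]
    · cases b <;> simp [uvec_apply]
    · intro j _ hj; simp [uvec_apply, hj]
    · intro h; exact absurd (Finset.mem_univ i) h

lemma isNbrK_symm {x y : Fin k → ℤ} (h : IsNbrK x y) : IsNbrK y x := by
  unfold IsNbrK at *
  calc ∑ i, (x i - y i) ^ 2 = ∑ i, (y i - x i) ^ 2 := by apply Finset.sum_congr rfl; intros; ring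
  _ = 1 := h

lemma nbr_ne {x y : Fin k → ℤ} (h : IsNbrK x y) : y ≠ x := by
  rintro rfl
  unfold IsNbrK at h
  simp at h


noncomputable def nbrFinset (x : Fin k → ℤ) : Finset (Fin k → ℤ) :=
  Finset.univ.image (fun p : Fin k × Bool => x + uvec k p.1 p.2)

lemma mem_nbrFinset {x y : Fin k → ℤ} : y ∈ nbrFinset x ↔ IsNbrK x y := by
  rw [isNbrK_iff]
  simp only [nbrFinset, Finset.mem_image, Finset.mem_univ, true_and, Prod.exists]
  constructor
  · rintro ⟨i, b, rfl⟩; exact ⟨i, b, rfl⟩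
  · rintro ⟨i, b, rfl⟩; exact ⟨i, b, rfl⟩

lemma card_nbrFinset (x : Fin k → ℤ) : (nbrFinset x).card = 2 * k := by
  rw [nbrFinset, Finset.card_image_of_injective _ ?_, Finset.card_univ]
  · simp [Fintype.card_prod, mul_comm]
  · rintro ⟨i, b⟩ ⟨i', b'⟩ h
    have h2 : uvec k i b = uvec k i' b' := by
      have := congrArg (fun f => f - x) h
      simpa [add_sub_cancel_left] using this
    have hi : i = i' := by
      by_contra hne
      have := congrFun h2 i
      rw [uvec_apply, uvec_apply, if_pos rfl, if_neg hne] at this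
      cases b <;> simp_all
    subst hi
    have := congrFun h2 i
    rw [uvec_apply, uvec_apply, if_pos rfl, if_pos rfl] at this
    cases b <;> cases b' <;> simp_all

-- the box as a Finset
noncomputable def boxF (k r : ℕ) : Finset (Fin k → ℤ) :=
  Fintype.piFinset (fun _ : Fin k => Finset.Ioo (-(r : ℤ)) (r : ℤ))

lemma mem_boxF {r : ℕ} {x : Fin k → ℤ} : x ∈ boxF k r ↔ ∀ i, -(r:ℤ) < x i ∧ x i < r := by
  simp [boxF, Fintype.mem_piFinset]

lemma coe_boxF (r : ℕ) : (boxF k r : Set (Fin k → ℤ)) = boxK k r := by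
  ext x; simp [mem_boxF, boxK, abs_lt]

lemma card_boxF (r : ℕ) : (boxF k r).card = ((2 * (r:ℤ) - 1).toNat) ^ k := by
  rw [boxF, Fintype.card_piFinset]
  rw [Finset.prod_const, Finset.card_univ, Fintype.card_fin, Int.card_Ioo]
  congr 2
  omega

lemma card_boxF_real {r : ℕ} (hr : 1 ≤ r) :
    ((boxF k r).card : ℝ) = (2 * (r:ℝ) - 1) ^ k := by
  rw [card_boxF]
  have h1 : ((2 * (r:ℤ) - 1).toNat : ℝ) = 2 * (r:ℝ) - 1 := by
    have h2 : ((2 * (r:ℤ) - 1).toNat : ℤ) = 2 * (r:ℤ) - 1 := Int.toNat_of_nonneg (by omega)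
    have h3 := congrArg (Int.cast : ℤ → ℝ) h2
    push_cast at h3
    exact h3
  rw [Nat.cast_pow, h1]

lemma boxF_mono {r s : ℕ} (h : r ≤ s) : boxF k r ⊆ boxF k s := by
  intro x hx
  rw [mem_boxF] at *
  intro i
  have := hx i
  have : (r:ℤ) ≤ s := by exact_mod_cast h
  omega

lemma nbr_mem_boxF {r : ℕ} {x y : Fin k → ℤ} (hx : x ∈ boxF k r) (hxy : IsNbrK x y) :
    y ∈ boxF k (r + 1) := by
  rw [isNbrK_iff] at hxy
  obtain ⟨i, b, rfl⟩ := hxy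
  rw [mem_boxF] at *
  intro j
  have := hx j
  simp only [Pi.add_apply, uvec_apply]
  push_cast
  split_ifs <;> omega

-- ncard bridges
lemma ncard_inter_box (S : Set (Fin k → ℤ)) (r : ℕ) :
    (S ∩ boxK k r).ncard = ((boxF k r).filter (· ∈ S)).card := by
  rw [← Set.ncard_coe_finset]
  congr 1
  ext x
  simp only [Set.mem_inter_iff, Finset.coe_filter, Set.mem_setOf_eq, ← coe_boxF r,
    Finset.mem_coe]
  tauto

lemma nbrCountK_eq (S : Set (Fin k → ℤ)) (x : Fin k → ℤ) :
    nbrCountK S x = ((nbrFinset x).filter (· ∈ S)).card := by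
  rw [nbrCountK, ← Set.ncard_coe_finset]
  congr 1
  ext y
  simp only [Set.mem_setOf_eq, Finset.coe_filter, mem_nbrFinset]
  tauto

lemma partner_unique {S : Set (Fin k → ℤ)} (hS : ∀ x ∈ S, nbrCountK S x ≤ 1)
    {x p q : Fin k → ℤ} (hx : x ∈ S) (hp : p ∈ S) (hq : q ∈ S)
    (h1 : IsNbrK x p) (h2 : IsNbrK x q) : p = q := by
  have hfin : {y ∈ S | IsNbrK x y}.Finite := by
    apply Set.Finite.subset (nbrFinset x).finite_toSet
    intro y hy
    exact Finset.mem_coe.mpr (mem_nbrFinset.mpr hy.2)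
  exact (Set.ncard_le_one_iff hfin).mp (hS x hx) ⟨hp, h1⟩ ⟨hq, h2⟩


lemma sum_count_swap {α : Type*} [DecidableEq α] (A B : Finset α) (P : α → α → Prop)
    [∀ x y, Decidable (P x y)] :
    ∑ x ∈ A, (B.filter (fun y => P x y)).card = ∑ y ∈ B, (A.filter (fun x => P x y)).card := by
  simp_rw [Finset.card_filter]
  exact Finset.sum_comm

lemma key1 {k : ℕ} {S : Set (Fin k → ℤ)} {n : ℕ} (hn2 : n ≤ 2 * k)
    (hS : ∀ x ∈ S, nbrCountK S x ≤ n) (r : ℕ) :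
    (4 * k - n) * ((boxF k r).filter (· ∈ S)).card ≤ 2 * k * (boxF k (r+1)).card := by
  classical
  set A := (boxF k r).filter (· ∈ S) with hA
  set B := boxF k (r+1) with hB
  have hswap := sum_count_swap A B (fun x y => y ∉ S ∧ IsNbrK x y)
  -- row lower bound
  have hrow : ∀ x ∈ A, 2 * k - n ≤ (B.filter (fun y => y ∉ S ∧ IsNbrK x y)).card := by
    intro x hx
    rw [hA, Finset.mem_filter] at hx
    have hfe : B.filter (fun y => y ∉ S ∧ IsNbrK x y) = (nbrFinset x).filter (· ∉ S) := by
      ext y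
      simp only [Finset.mem_filter, mem_nbrFinset]
      constructor
      · rintro ⟨_, h1, h2⟩; exact ⟨h2, h1⟩
      · rintro ⟨h2, h1⟩; exact ⟨nbr_mem_boxF hx.1 h2, h1, h2⟩
    rw [hfe]
    have hcc := Finset.card_filter_add_card_filter_not (s := nbrFinset x) (p := (· ∈ S))
    rw [card_nbrFinset] at hcc
    have hcnt : ((nbrFinset x).filter (· ∈ S)).card ≤ n := by
      rw [← nbrCountK_eq]; exact hS x hx.2
    omega
  have hlow : (2 * k - n) * A.card ≤ ∑ x ∈ A, (B.filter (fun y => y ∉ S ∧ IsNbrK x y)).card := by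
    calc (2 * k - n) * A.card = ∑ _x ∈ A, (2 * k - n) := by rw [Finset.sum_const, smul_eq_mul, mul_comm]
    _ ≤ _ := Finset.sum_le_sum hrow
  -- column upper bound
  have hcol : ∀ y ∈ B, (A.filter (fun x => y ∉ S ∧ IsNbrK x y)).card
      ≤ if y ∈ S then 0 else 2 * k := by
    intro y _
    split_ifs with hy
    · rw [Nat.le_zero, Finset.card_eq_zero, Finset.filter_eq_empty_iff]
      intro x _ hc
      exact hc.1 hy
    · calc (A.filter (fun x => y ∉ S ∧ IsNbrK x y)).card ≤ (nbrFinset y).card := by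
            apply Finset.card_le_card
            intro x hx
            rw [Finset.mem_filter] at hx
            exact mem_nbrFinset.mpr (isNbrK_symm hx.2.2)
      _ = 2 * k := card_nbrFinset y
  have hup : ∑ y ∈ B, (A.filter (fun x => y ∉ S ∧ IsNbrK x y)).card
      ≤ 2 * k * (B.filter (· ∉ S)).card := by
    calc ∑ y ∈ B, (A.filter (fun x => y ∉ S ∧ IsNbrK x y)).card
        ≤ ∑ y ∈ B, if y ∈ S then 0 else 2 * k := Finset.sum_le_sum hcol
    _ = ∑ y ∈ B.filter (· ∉ S), 2 * k := by
        rw [Finset.sum_filter]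
        apply Finset.sum_congr rfl
        intro y _
        by_cases hy : y ∈ S <;> simp [hy]
    _ = 2 * k * (B.filter (· ∉ S)).card := by rw [Finset.sum_const, smul_eq_mul, mul_comm]
  -- sizes
  have hAB : A ⊆ B.filter (· ∈ S) := by
    intro x hx
    rw [hA, Finset.mem_filter] at hx
    exact Finset.mem_filter.mpr ⟨boxF_mono (Nat.le_succ r) hx.1, hx.2⟩
  have hsplit := Finset.card_filter_add_card_filter_not (s := B) (p := (· ∈ S))
  have hAle : A.card ≤ (B.filter (· ∈ S)).card := Finset.card_le_card hAB
  have hkey : (2 * k - n) * A.card ≤ 2 * k * (B.filter (· ∉ S)).card := by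
    calc (2 * k - n) * A.card ≤ _ := hlow
    _ = _ := hswap
    _ ≤ _ := hup
  have hnot : (B.filter (· ∉ S)).card ≤ B.card - A.card := by omega
  have h2 : (2 * k - n) * A.card ≤ 2 * k * (B.card - A.card) :=
    le_trans hkey (Nat.mul_le_mul_left _ hnot)
  have hABc : A.card ≤ B.card := le_trans hAle (by omega)
  have e1 : 2 * k * (B.card - A.card) + 2 * k * A.card = 2 * k * B.card := by
    rw [← Nat.mul_add, Nat.sub_add_cancel hABc]
  have e2 : (2 * k - n) * A.card + 2 * k * A.card = (4 * k - n) * A.card := by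
    rw [← Nat.add_mul]
    congr 1
    omega
  omega


lemma tendsto_lin : Tendsto (fun r : ℕ => 2 * (r:ℝ) - 1) atTop atTop := by
  apply Filter.tendsto_atTop_add_const_right
  exact (tendsto_natCast_atTop_atTop (R := ℝ)).const_mul_atTop two_pos

lemma ratio_tendsto (c : ℝ) (k : ℕ) :
    Tendsto (fun r : ℕ => ((2 * (r:ℝ) + c) / (2 * (r:ℝ) - 1)) ^ k) atTop (𝓝 1) := by
  have h2 : Tendsto (fun r : ℕ => (c + 1) / (2 * (r:ℝ) - 1)) atTop (𝓝 0) :=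
    tendsto_const_nhds.div_atTop tendsto_lin
  have h3 : Tendsto (fun r : ℕ => 1 + (c + 1) / (2 * (r:ℝ) - 1)) atTop (𝓝 1) := by
    have := h2.const_add 1
    simpa using this
  have h4 : Tendsto (fun r : ℕ => (2 * (r:ℝ) + c) / (2 * (r:ℝ) - 1)) atTop (𝓝 1) := by
    apply h3.congr'
    filter_upwards [eventually_ge_atTop 1] with r hr
    have hne : 2 * (r:ℝ) - 1 ≠ 0 := by
      have : (1:ℝ) ≤ (r:ℝ) := by exact_mod_cast hr
      nlinarith
    field_simp
    ring
  have := h4.pow k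
  simpa using this

lemma limsup_le_of_le_tendsto {u v : ℕ → ℝ} {L : ℝ}
    (h0 : ∀ᶠ r in atTop, 0 ≤ u r) (hle : ∀ᶠ r in atTop, u r ≤ v r)
    (hv : Tendsto v atTop (𝓝 L)) : limsup u atTop ≤ L := by
  have hcb : IsCoboundedUnder (· ≤ ·) atTop u :=
    isCoboundedUnder_le_of_eventually_le atTop h0
  have := Filter.limsup_le_limsup hle hcb hv.isBoundedUnder_le
  rwa [hv.limsup_eq] at this


lemma upperDensity_le_of_count (S : Set (Fin k → ℤ)) {C : ℝ} (c : ℝ)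
    (h : ∀ r : ℕ, 1 ≤ r → ((((boxF k r).filter (· ∈ S)).card : ℝ)) ≤ C * (2 * (r:ℝ) + c) ^ k) :
    upperDensityK S ≤ C := by
  have hpos : ∀ r : ℕ, 1 ≤ r → (0:ℝ) < (2 * (r:ℝ) - 1) ^ k := by
    intro r hr
    apply pow_pos
    have : (1:ℝ) ≤ (r:ℝ) := by exact_mod_cast hr
    nlinarith
  rw [upperDensityK]
  apply limsup_le_of_le_tendsto (v := fun r : ℕ => C * ((2 * (r:ℝ) + c) / (2 * (r:ℝ) - 1)) ^ k)
  · filter_upwards [eventually_ge_atTop 1] with r hr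
    exact div_nonneg (Nat.cast_nonneg _) (hpos r hr).le
  · filter_upwards [eventually_ge_atTop 1] with r hr
    rw [ncard_inter_box S r]
    rw [div_pow, ← mul_div_assoc]
    exact (div_le_div_iff_of_pos_right (hpos r hr)).mpr (h r hr)
  · have := (ratio_tendsto c k).const_mul C
    simpa using this


-- checker is independent
lemma checker_indep (x : Fin k → ℤ) (hx : x ∈ checkerK k) (y : Fin k → ℤ)
    (hy : y ∈ checkerK k) : ¬ IsNbrK x y := by
  intro h
  rw [isNbrK_iff] at h
  obtain ⟨i, b, rfl⟩ := h
  have hsum : ∑ j, (x + uvec k i b) j = (∑ j, x j) + (if b then 1 else -1) := by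
    simp only [Pi.add_apply, Finset.sum_add_distrib]
    congr 1
    exact Finset.sum_pi_single' i _ _ |>.trans (by simp)
  rw [checkerK, Set.mem_setOf_eq] at hx hy
  rw [hsum] at hy
  rcases hx with ⟨m, hm⟩
  rcases hy with ⟨m', hm'⟩
  cases b <;> simp at hm' <;> omega

-- the sign character
def chi (t : ℤ) : ℤ := if Even t then 1 else -1

lemma chi_add (a b : ℤ) : chi (a + b) = chi a * chi b := by
  by_cases ha : Even a <;> by_cases hb : Even b <;>
    simp [chi, ha, hb, Int.even_add]

lemma chi_sum {ι : Type*} (s : Finset ι) (f : ι → ℤ) :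
    chi (∑ i ∈ s, f i) = ∏ i ∈ s, chi (f i) := by
  induction s using Finset.cons_induction with
  | empty => simp [chi]
  | cons a s ha ih => rw [Finset.sum_cons, Finset.prod_cons, chi_add, ih]

lemma chi_neg (t : ℤ) : chi (-t) = chi t := by simp [chi]

lemma chi_succ (t : ℤ) : chi (t + 1) = -chi t := by
  by_cases h : Even t <;> simp [chi, h, Int.even_add_one]

lemma chi_sq (t : ℤ) : chi t * chi t = 1 := by
  by_cases h : Even t <;> simp [chi, h]

lemma sum_chi_Icc (m : ℕ) : ∑ t ∈ Finset.Icc (-(m:ℤ)) m, chi t = chi m := by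
  induction m with
  | zero => simp [chi]
  | succ m ih =>
    have hset : Finset.Icc (-(m+1:ℕ):ℤ) ((m+1:ℕ):ℤ) =
        insert (-(m+1:ℕ):ℤ) (insert ((m:ℤ)+1) (Finset.Icc (-(m:ℤ)) m)) := by
      ext t
      simp only [Finset.mem_Icc, Finset.mem_insert]
      push_cast
      omega
    rw [hset, Finset.sum_insert, Finset.sum_insert]
    · rw [ih]
      push_cast
      rw [show (-((m:ℤ)+1)) = -(((m:ℤ))+1) by ring, chi_neg, chi_succ]
      ring
    · simp only [Finset.mem_Icc]
      omega
    · simp only [Finset.mem_insert, Finset.mem_Icc]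
      push_cast
      omega

lemma sum_chi_box {r : ℕ} (hr : 1 ≤ r) :
    ∑ x ∈ boxF k r, chi (∑ i, x i) = (chi ((r:ℤ) - 1)) ^ k := by
  have h1 : ∀ x : Fin k → ℤ, chi (∑ i, x i) = ∏ i, chi (x i) := fun x => chi_sum _ _
  simp_rw [h1]
  rw [boxF, ← Finset.prod_univ_sum]
  have h2 : ∑ t ∈ Finset.Ioo (-(r:ℤ)) (r:ℤ), chi t = chi ((r:ℤ) - 1) := by
    have hIcc : Finset.Ioo (-(r:ℤ)) (r:ℤ) = Finset.Icc (-((r-1:ℕ):ℤ)) ((r-1:ℕ):ℤ) := by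
      ext t
      simp only [Finset.mem_Ioo, Finset.mem_Icc]
      have : ((r-1:ℕ):ℤ) = (r:ℤ) - 1 := by push_cast [hr]; ring
      omega
    rw [hIcc, sum_chi_Icc]
    congr 1
    push_cast [hr]
    ring
  rw [Finset.prod_const, h2, Finset.card_univ, Fintype.card_fin]

lemma checker_count {r : ℕ} (hr : 1 ≤ r) :
    2 * ((((boxF k r).filter (· ∈ checkerK k)).card : ℤ)) =
      ((boxF k r).card : ℤ) + (chi ((r:ℤ) - 1)) ^ k := by
  have key : ∑ x ∈ boxF k r, (1 + chi (∑ i, x i)) =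
      ((boxF k r).card : ℤ) + (chi ((r:ℤ)-1))^k := by
    rw [Finset.sum_add_distrib, Finset.sum_const, sum_chi_box hr]
    simp [Finset.card_univ]
  rw [← key]
  have term : ∀ x : Fin k → ℤ, (1 + chi (∑ i, x i)) =
      if x ∈ checkerK k then 2 else 0 := by
    intro x
    by_cases h : x ∈ checkerK k
    · rw [if_pos h]
      have : Even (∑ i, x i) := by
        rw [checkerK, Set.mem_setOf_eq] at h
        rcases h with ⟨c, hc⟩
        refine ⟨c, ?_⟩
        rw [hc]; ring
      simp [chi, this]
    · rw [if_neg h]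
      have : ¬ Even (∑ i, x i) := by
        intro he
        apply h
        rw [checkerK, Set.mem_setOf_eq]
        rcases he with ⟨c, hc⟩
        refine ⟨c, ?_⟩
        rw [hc]; ring
      simp [chi, this]
  calc (2:ℤ) * (((boxF k r).filter (· ∈ checkerK k)).card : ℤ)
      = ∑ x ∈ (boxF k r).filter (· ∈ checkerK k), (2:ℤ) := by
        rw [Finset.sum_const]; push_cast; ring
    _ = ∑ x ∈ boxF k r, if x ∈ checkerK k then (2:ℤ) else 0 := by rw [Finset.sum_filter]
    _ = ∑ x ∈ boxF k r, (1 + chi (∑ i, x i)) := by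
        apply Finset.sum_congr rfl
        intro x _
        rw [term x]

lemma checker_density (hk : 1 ≤ k) : HasDensityK (checkerK k) (1/2 : ℝ) := by
  rw [HasDensityK]
  have key : ∀ r : ℕ, 1 ≤ r →
      |(Set.ncard (checkerK k ∩ boxK k r) : ℝ) / (2*(r:ℝ)-1)^k - 1/2| ≤ 1/(2*(2*(r:ℝ)-1)) := by
    intro r hr
    have hb : (1:ℝ) ≤ 2*(r:ℝ)-1 := by
      have : (1:ℝ) ≤ (r:ℝ) := by exact_mod_cast hr
      nlinarith
    have hD : (0:ℝ) < (2*(r:ℝ)-1)^k := pow_pos (by linarith) k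
    have hDge : 2*(r:ℝ)-1 ≤ (2*(r:ℝ)-1)^k := by
      calc 2*(r:ℝ)-1 = (2*(r:ℝ)-1)^1 := (pow_one _).symm
      _ ≤ _ := pow_le_pow_right₀ hb hk
    have hcount := checker_count (k := k) hr
    have hchi : chi ((r:ℤ)-1) = 1 ∨ chi ((r:ℤ)-1) = -1 := by
      unfold chi; split_ifs <;> simp
    have he : (chi ((r:ℤ)-1))^k = 1 ∨ (chi ((r:ℤ)-1))^k = -1 := by
      rcases hchi with h | h
      · left; rw [h, one_pow]
      · rw [h]
        rcases Nat.even_or_odd k with hp | hp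
        · left; exact hp.neg_one_pow
        · right; exact hp.neg_one_pow
    have hcard := ncard_inter_box (checkerK k) r
    have hboxr := card_boxF_real (k := k) hr
    set a : ℕ := ((boxF k r).filter (· ∈ checkerK k)).card with ha
    rw [hcard]
    rcases he with he | he <;> rw [he] at hcount
    · have haR : 2*(a:ℝ) = (2*(r:ℝ)-1)^k + 1 := by
        rw [← hboxr]
        exact_mod_cast hcount
      have heq : (a:ℝ)/((2*(r:ℝ)-1)^k) - 1/2 = 1/(2*(2*(r:ℝ)-1)^k) := by
        field_simp
        nlinarith [haR, hD]
      rw [heq, abs_of_nonneg (by positivity)]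
      apply one_div_le_one_div_of_le (by linarith) (by nlinarith)
    · have haR : 2*(a:ℝ) = (2*(r:ℝ)-1)^k - 1 := by
        rw [← hboxr]
        push_cast
        exact_mod_cast hcount
      have heq : (a:ℝ)/((2*(r:ℝ)-1)^k) - 1/2 = -(1/(2*(2*(r:ℝ)-1)^k)) := by
        field_simp
        nlinarith [haR, hD]
      rw [heq, abs_neg, abs_of_nonneg (by positivity)]
      apply one_div_le_one_div_of_le (by linarith) (by nlinarith)
  have hlow : Tendsto (fun r : ℕ => 1/2 - 1/(2*(2*(r:ℝ)-1))) atTop (𝓝 (1/2)) := by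
    have h0 : Tendsto (fun r : ℕ => 1/(2*(2*(r:ℝ)-1))) atTop (𝓝 0) :=
      tendsto_const_nhds.div_atTop (tendsto_lin.const_mul_atTop two_pos)
    have := (tendsto_const_nhds (α := ℕ) (f := atTop) (x := (1/2:ℝ))).sub h0
    simpa using this
  have hhigh : Tendsto (fun r : ℕ => 1/2 + 1/(2*(2*(r:ℝ)-1))) atTop (𝓝 (1/2)) := by
    have h0 : Tendsto (fun r : ℕ => 1/(2*(2*(r:ℝ)-1))) atTop (𝓝 0) :=
      tendsto_const_nhds.div_atTop (tendsto_lin.const_mul_atTop two_pos)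
    have := (tendsto_const_nhds (α := ℕ) (f := atTop) (x := (1/2:ℝ))).add h0
    simpa using this
  apply tendsto_of_tendsto_of_tendsto_of_le_of_le' hlow hhigh
  · filter_upwards [eventually_ge_atTop 1] with r hr
    have h := abs_le.mp (key r hr)
    linarith [h.1]
  · filter_upwards [eventually_ge_atTop 1] with r hr
    have h := abs_le.mp (key r hr)
    linarith [h.2]


-- new lemmas
lemma isNbrK_shift (c : Fin k → ℤ) {a b : Fin k → ℤ} (h : IsNbrK a b) :
    IsNbrK c (c + (b - a)) := by
  unfold IsNbrK at *
  calc ∑ i, ((c + (b - a)) i - c i) ^ 2 = ∑ i, (b i - a i) ^ 2 := by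
        apply Finset.sum_congr rfl
        intro i _
        show (c i + (b i - a i) - c i) ^ 2 = (b i - a i) ^ 2
        ring
  _ = 1 := h

lemma opp_nbr {x p : Fin k → ℤ} (h : IsNbrK x p) : IsNbrK p (p + (p - x)) :=
  isNbrK_shift p h

lemma opp_ne {x p : Fin k → ℤ} (h : IsNbrK x p) : p + (p - x) ≠ x := by
  intro he
  apply nbr_ne h
  funext i
  have h1 := congrFun he i
  simp only [Pi.add_apply, Pi.sub_apply] at h1
  omega

lemma opp_ne' {x p : Fin k → ℤ} (h : IsNbrK x p) : x ≠ p + (p - x) :=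
  fun he => opp_ne h he.symm

lemma sum_ite_card {α : Type*} (B : Finset α) (P : α → Prop) [DecidablePred P] (c : ℕ) :
    (∑ y ∈ B, if P y then c else 0) = c * (B.filter P).card := by
  rw [← Finset.sum_filter, Finset.sum_const, smul_eq_mul, mul_comm]

/-- choice of the "partner" `p` witnessing a leftover contribution from `x` to `y` -/
noncomputable def pickP (S : Set (Fin k → ℤ)) (y x : Fin k → ℤ) : Fin k → ℤ :=
  if h : ∃ p, p ∈ S ∧ IsNbrK x p ∧ IsNbrK p y ∧ y ≠ x ∧ y ≠ p + (p - x) then h.choose else x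

lemma pickP_spec {S : Set (Fin k → ℤ)} {y x : Fin k → ℤ}
    (h : ∃ p, p ∈ S ∧ IsNbrK x p ∧ IsNbrK p y ∧ y ≠ x ∧ y ≠ p + (p - x)) :
    pickP S y x ∈ S ∧ IsNbrK x (pickP S y x) ∧ IsNbrK (pickP S y x) y ∧
      y ≠ x ∧ y ≠ pickP S y x + (pickP S y x - x) := by
  rw [pickP, dif_pos h]
  exact h.choose_spec

noncomputable def pickX (S : Set (Fin k → ℤ)) (y p : Fin k → ℤ) : Fin k → ℤ :=
  if h : ∃ x, x ∈ S ∧ IsNbrK p x ∧ y ≠ x ∧ y ≠ p + (p - x) then h.choose else p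

lemma pickX_spec {S : Set (Fin k → ℤ)} {y p : Fin k → ℤ}
    (h : ∃ x, x ∈ S ∧ IsNbrK p x ∧ y ≠ x ∧ y ≠ p + (p - x)) :
    pickX S y p ∈ S ∧ IsNbrK p (pickX S y p) ∧ y ≠ pickX S y p ∧
      y ≠ p + (p - pickX S y p) := by
  rw [pickX, dif_pos h]
  exact h.choose_spec

noncomputable def Phi (S : Set (Fin k → ℤ)) (y p : Fin k → ℤ) : Fin k → ℤ :=
  y + (pickX S y p - p)

/-- the weight function for the discharging argument -/
noncomputable def Wt (S : Set (Fin k → ℤ)) (k' : ℕ) (x y : Fin k → ℤ) : ℕ :=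
  (if y ∉ S ∧ IsNbrK x y then 2 * k' - 2 else 0) +
  (if y ∉ S ∧ ∃ p, p ∈ S ∧ IsNbrK x p ∧ IsNbrK p y ∧ y ≠ x ∧ y ≠ p + (p - x) then 1 else 0)

section key2
variable {S : Set (Fin k → ℤ)} (hk : 2 ≤ k) (hS : ∀ x ∈ S, nbrCountK S x ≤ 1)

include hk hS in
/-- row bound : every point of `S` in the box sends total weight at least `2k(2k-2)`. -/
lemma row_bound {r : ℕ} {x : Fin k → ℤ} (hxb : x ∈ boxF k r) (hxS : x ∈ S) :
    2 * k * (2 * k - 2) ≤ ∑ y ∈ boxF k (r + 2), Wt S k x y := by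
  classical
  set B := boxF k (r + 2) with hB
  have hsplit : (∑ y ∈ B, Wt S k x y) =
      (∑ y ∈ B, if y ∉ S ∧ IsNbrK x y then 2 * k - 2 else 0) +
      (∑ y ∈ B, if y ∉ S ∧ (∃ p, p ∈ S ∧ IsNbrK x p ∧ IsNbrK p y ∧ y ≠ x ∧ y ≠ p + (p - x))
        then 1 else 0) := Finset.sum_add_distrib
  rw [hsplit, sum_ite_card, sum_ite_card, one_mul]
  -- first filter is exactly the non-S neighbours of x
  have hf1 : B.filter (fun y => y ∉ S ∧ IsNbrK x y) = (nbrFinset x).filter (· ∉ S) := by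
    ext y
    simp only [Finset.mem_filter, mem_nbrFinset]
    constructor
    · rintro ⟨_, h1, h2⟩; exact ⟨h2, h1⟩
    · rintro ⟨h2, h1⟩
      exact ⟨boxF_mono (by omega) (nbr_mem_boxF hxb h2), h1, h2⟩
  rw [hf1]
  have hcc := Finset.card_filter_add_card_filter_not (s := nbrFinset x) (p := (· ∈ S))
  rw [card_nbrFinset] at hcc
  have hcnt : ((nbrFinset x).filter (· ∈ S)).card ≤ 1 := by
    rw [← nbrCountK_eq]; exact hS x hxS
  rcases Nat.eq_zero_or_pos ((nbrFinset x).filter (· ∈ S)).card with h0 | h1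
  · -- isolated : first term alone gives 2k * (2k-2)
    have : ((nbrFinset x).filter (· ∉ S)).card = 2 * k := by omega
    rw [this]
    have : (2*k-2) * (2*k) = 2*k*(2*k-2) := mul_comm _ _
    omega
  · -- partnered
    obtain ⟨p, hp⟩ := Finset.card_pos.mp h1
    rw [Finset.mem_filter, mem_nbrFinset] at hp
    obtain ⟨hpnbr, hpS⟩ := hp
    have hcard1 : ((nbrFinset x).filter (· ∉ S)).card = 2 * k - 1 := by omega
    rw [hcard1]
    -- second term : at least the 2k-2 side points of p
    set sideSet : Finset (Fin k → ℤ) := ((nbrFinset p).erase (p + (p - x))).erase x with hss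
    have hsidecard : sideSet.card = 2 * k - 2 := by
      rw [hss, Finset.card_erase_of_mem (Finset.mem_erase.mpr
          ⟨opp_ne' hpnbr, mem_nbrFinset.mpr (isNbrK_symm hpnbr)⟩),
        Finset.card_erase_of_mem (mem_nbrFinset.mpr (opp_nbr hpnbr)), card_nbrFinset]
      omega
    have hsub : sideSet ⊆ B.filter (fun y => y ∉ S ∧
        ∃ q, q ∈ S ∧ IsNbrK x q ∧ IsNbrK q y ∧ y ≠ x ∧ y ≠ q + (q - x)) := by
      intro y hy
      rw [hss] at hy
      rw [Finset.mem_erase] at hy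
      obtain ⟨hyx, hy⟩ := hy
      rw [Finset.mem_erase, mem_nbrFinset] at hy
      obtain ⟨hyopp, hynbr⟩ := hy
      have hyS : y ∉ S := by
        intro hyS
        exact hyx (partner_unique hS hpS hyS hxS hynbr (isNbrK_symm hpnbr))
      refine Finset.mem_filter.mpr ⟨?_, hyS, p, hpS, hpnbr, hynbr, hyx, hyopp⟩
      exact nbr_mem_boxF (nbr_mem_boxF hxb hpnbr) hynbr
    have h2 : 2 * k - 2 ≤ (B.filter (fun y => y ∉ S ∧
        ∃ q, q ∈ S ∧ IsNbrK x q ∧ IsNbrK q y ∧ y ≠ x ∧ y ≠ q + (q - x))).card := by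
      rw [← hsidecard]
      exact Finset.card_le_card hsub
    have harith : (2*k-2) * (2*k-1) + (2*k-2) = 2*k*(2*k-2) := by
      have h4 : (2*k-2) * (2*k-1) + (2*k-2) * 1 = (2*k-2) * (2*k-1+1) := by
        rw [← Nat.mul_add]
      have h5 : 2*k-1+1 = 2*k := by omega
      rw [mul_one] at h4
      rw [h4, h5, mul_comm]
    omega

include hk hS in
/-- column bound : every point not in `S` receives total weight at most `2k(2k-2)`. -/
lemma col_bound {y : Fin k → ℤ} (hyS : y ∉ S) (A : Finset (Fin k → ℤ)) (hA : ∀ x ∈ A, x ∈ S) :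
    ∑ x ∈ A, Wt S k x y ≤ 2 * k * (2 * k - 2) := by
  classical
  have hsplit : (∑ x ∈ A, Wt S k x y) =
      (∑ x ∈ A, if y ∉ S ∧ IsNbrK x y then 2 * k - 2 else 0) +
      (∑ x ∈ A, if y ∉ S ∧ (∃ p, p ∈ S ∧ IsNbrK x p ∧ IsNbrK p y ∧ y ≠ x ∧ y ≠ p + (p - x))
        then 1 else 0) := Finset.sum_add_distrib
  rw [hsplit, sum_ite_card, sum_ite_card, one_mul]
  -- the direct neighbours
  set mset : Finset (Fin k → ℤ) := (nbrFinset y).filter (· ∈ S) with hmset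
  have hm1 : (A.filter (fun x => y ∉ S ∧ IsNbrK x y)).card ≤ mset.card := by
    apply Finset.card_le_card
    intro x hx
    rw [Finset.mem_filter] at hx
    exact Finset.mem_filter.mpr ⟨mem_nbrFinset.mpr (isNbrK_symm hx.2.2), hA x hx.1⟩
  -- the leftover senders, mapped to their partners
  set sSet : Finset (Fin k → ℤ) := (nbrFinset y).filter (fun p => p ∈ S ∧
      ∃ x, x ∈ S ∧ IsNbrK p x ∧ y ≠ x ∧ y ≠ p + (p - x)) with hsSet
  have hs1 : (A.filter (fun x => y ∉ S ∧
      ∃ p, p ∈ S ∧ IsNbrK x p ∧ IsNbrK p y ∧ y ≠ x ∧ y ≠ p + (p - x))).card ≤ sSet.card := by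
    apply Finset.card_le_card_of_injOn (fun x => pickP S y x)
    · intro x hx
      rw [Finset.mem_coe, Finset.mem_filter] at hx
      obtain ⟨hxA, _, hex⟩ := hx
      obtain ⟨hpS, hxp, hpy, hyx, hyopp⟩ := pickP_spec hex
      refine Finset.mem_filter.mpr ⟨mem_nbrFinset.mpr (isNbrK_symm hpy), hpS, x, hA x hxA,
        isNbrK_symm hxp, hyx, hyopp⟩
    · intro x1 hx1 x2 hx2 heq
      simp only [Finset.coe_filter, Set.mem_setOf_eq] at hx1 hx2
      obtain ⟨hx1A, _, hex1⟩ := hx1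
      obtain ⟨hx2A, _, hex2⟩ := hx2
      obtain ⟨hp1S, hxp1, _, _, _⟩ := pickP_spec hex1
      obtain ⟨hp2S, hxp2, _, _, _⟩ := pickP_spec hex2
      simp only at heq
      exact partner_unique hS hp1S (hA x1 hx1A) (hA x2 hx2A)
        (isNbrK_symm hxp1) (by rw [heq]; exact isNbrK_symm hxp2)
  -- image of sSet under Phi lands in the missing directions
  have himg : ∀ p ∈ sSet, Phi S y p ∈ (nbrFinset y).filter (· ∉ S) := by
    intro p hp
    rw [hsSet, Finset.mem_filter, mem_nbrFinset] at hp
    obtain ⟨hpy, hpS, hex⟩ := hp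
    obtain ⟨hxS, hpx, hyx, hyopp⟩ := pickX_spec hex
    simp only [Phi]
    have hity : IsNbrK y (y + (pickX S y p - p)) := isNbrK_shift y hpx
    refine Finset.mem_filter.mpr ⟨mem_nbrFinset.mpr hity, ?_⟩
    intro hwS
    have hwnbr : IsNbrK (pickX S y p) (y + (pickX S y p - p)) := by
      have h1 : IsNbrK (pickX S y p) (pickX S y p + (y - p)) :=
        isNbrK_shift _ (isNbrK_symm hpy)
      have heqfun : pickX S y p + (y - p) = y + (pickX S y p - p) := by ring
      rwa [heqfun] at h1
    have hpeq : p = y + (pickX S y p - p) :=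
      partner_unique hS hxS hpS hwS (isNbrK_symm hpx) hwnbr
    apply hyopp
    linear_combination -hpeq
  have himgsub : sSet.image (Phi S y) ⊆ (nbrFinset y).filter (· ∉ S) := by
    intro w hw
    obtain ⟨p, hp, rfl⟩ := Finset.mem_image.mp hw
    exact himg p hp
  have hfib : ∀ w ∈ sSet.image (Phi S y),
      (sSet.filter (fun p => Phi S y p = w)).card ≤ 2 * k - 2 := by
    intro w hw
    have hwm := himgsub hw
    rw [Finset.mem_filter, mem_nbrFinset] at hwm
    obtain ⟨hwy, hwS⟩ := hwm
    have hopp_mem : (y + (y - w)) ∈ (nbrFinset y).erase w := by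
      refine Finset.mem_erase.mpr ⟨?_, mem_nbrFinset.mpr (isNbrK_shift y (isNbrK_symm hwy))⟩
      intro hwe
      apply nbr_ne hwy
      funext i
      have h1 := congrFun hwe i
      simp only [Pi.add_apply, Pi.sub_apply] at h1
      omega
    have hsub2 : sSet.filter (fun p => Phi S y p = w) ⊆
        ((nbrFinset y).erase w).erase (y + (y - w)) := by
      intro p hp
      rw [Finset.mem_filter] at hp
      obtain ⟨hpsSet, hPhi⟩ := hp
      simp only [Phi] at hPhi
      rw [hsSet, Finset.mem_filter, mem_nbrFinset] at hpsSet
      obtain ⟨hpy, hpS, hex⟩ := hpsSet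
      obtain ⟨hxS, hpx, hyx, hyopp⟩ := pickX_spec hex
      refine Finset.mem_erase.mpr ⟨?_, Finset.mem_erase.mpr ⟨?_, mem_nbrFinset.mpr hpy⟩⟩
      · intro hpe
        apply hyS
        have hxy : pickX S y p = y := by linear_combination hPhi + hpe
        rw [← hxy]
        exact hxS
      · intro hpe
        rw [hpe] at hpS
        exact hwS hpS
    calc (sSet.filter (fun p => Phi S y p = w)).card
        ≤ (((nbrFinset y).erase w).erase (y + (y - w))).card := Finset.card_le_card hsub2
      _ = 2 * k - 2 := by
        rw [Finset.card_erase_of_mem hopp_mem,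
          Finset.card_erase_of_mem (mem_nbrFinset.mpr hwy), card_nbrFinset]
        omega
  have hsc : sSet.card ≤ (2 * k - 2) * (sSet.image (Phi S y)).card :=
    Finset.card_le_mul_card_image _ _ hfib
  have hnm := Finset.card_filter_add_card_filter_not (s := nbrFinset y) (p := (· ∈ S))
  rw [card_nbrFinset, ← hmset] at hnm
  have himcard : (sSet.image (Phi S y)).card ≤ 2 * k - mset.card := by
    have := Finset.card_le_card himgsub
    omega
  have hmb : mset.card ≤ 2 * k := by omega
  calc (2 * k - 2) * (A.filter (fun x => y ∉ S ∧ IsNbrK x y)).card +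
        (A.filter (fun x => y ∉ S ∧
          ∃ p, p ∈ S ∧ IsNbrK x p ∧ IsNbrK p y ∧ y ≠ x ∧ y ≠ p + (p - x))).card
      ≤ (2 * k - 2) * mset.card + (2 * k - 2) * (2 * k - mset.card) := by
        refine Nat.add_le_add (Nat.mul_le_mul_left _ hm1) ?_
        calc (A.filter _).card ≤ sSet.card := hs1
          _ ≤ (2 * k - 2) * (sSet.image (Phi S y)).card := hsc
          _ ≤ (2 * k - 2) * (2 * k - mset.card) := Nat.mul_le_mul_left _ himcard
    _ = (2 * k - 2) * (mset.card + (2 * k - mset.card)) := (Nat.mul_add _ _ _).symm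
    _ = 2 * k * (2 * k - 2) := by rw [Nat.add_sub_cancel' hmb, mul_comm]
include hk hS in
lemma key2 (r : ℕ) :
    2 * ((boxF k r).filter (· ∈ S)).card ≤ (boxF k (r + 2)).card := by
  classical
  set A := (boxF k r).filter (· ∈ S) with hA
  set B := boxF k (r + 2) with hB
  have hAS : ∀ x ∈ A, x ∈ S := fun x hx => (Finset.mem_filter.mp hx).2
  have hrow : 2*k*(2*k-2) * A.card ≤ ∑ x ∈ A, ∑ y ∈ B, Wt S k x y := by
    calc 2*k*(2*k-2) * A.card = ∑ _x ∈ A, 2*k*(2*k-2) := by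
          rw [Finset.sum_const, smul_eq_mul, mul_comm]
    _ ≤ _ := Finset.sum_le_sum (fun x hx =>
        row_bound hk hS (Finset.mem_filter.mp hx).1 (hAS x hx))
  rw [Finset.sum_comm] at hrow
  have hzero : ∀ y ∈ B.filter (· ∈ S), ∑ x ∈ A, Wt S k x y = 0 := by
    intro y hy
    rw [Finset.mem_filter] at hy
    apply Finset.sum_eq_zero
    intro x _
    simp [Wt, if_neg, hy.2]
  have hup : ∑ y ∈ B, ∑ x ∈ A, Wt S k x y ≤ 2*k*(2*k-2) * (B.filter (· ∉ S)).card := by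
    have h1 : ∑ y ∈ B.filter (· ∈ S), ∑ x ∈ A, Wt S k x y = 0 := Finset.sum_eq_zero hzero
    have h2 : ∑ y ∈ B.filter (· ∉ S), ∑ x ∈ A, Wt S k x y
        ≤ ∑ _y ∈ B.filter (· ∉ S), 2*k*(2*k-2) :=
      Finset.sum_le_sum (fun y hy => col_bound hk hS (Finset.mem_filter.mp hy).2 A hAS)
    calc ∑ y ∈ B, ∑ x ∈ A, Wt S k x y
        = (∑ y ∈ B.filter (· ∈ S), ∑ x ∈ A, Wt S k x y) +
          (∑ y ∈ B.filter (fun a => ¬ a ∈ S), ∑ x ∈ A, Wt S k x y) :=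
          (Finset.sum_filter_add_sum_filter_not B (· ∈ S) _).symm
    _ = ∑ y ∈ B.filter (· ∉ S), ∑ x ∈ A, Wt S k x y := by rw [h1, zero_add]
    _ ≤ ∑ _y ∈ B.filter (· ∉ S), 2*k*(2*k-2) := h2
    _ = 2*k*(2*k-2) * (B.filter (· ∉ S)).card := by
          rw [Finset.sum_const, smul_eq_mul, mul_comm]
  have hAB : A ⊆ B.filter (· ∈ S) := fun x hx =>
    Finset.mem_filter.mpr ⟨boxF_mono (by omega) (Finset.mem_filter.mp hx).1, hAS x hx⟩
  have hsplit := Finset.card_filter_add_card_filter_not (s := B) (p := (· ∈ S))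
  have hAle : A.card ≤ (B.filter (· ∈ S)).card := Finset.card_le_card hAB
  have hnot : (B.filter (· ∉ S)).card ≤ B.card - A.card := by omega
  have hfin : 2*k*(2*k-2) * A.card ≤ 2*k*(2*k-2) * (B.card - A.card) :=
    le_trans (le_trans hrow hup) (Nat.mul_le_mul_left _ hnot)
  have hpos : 0 < 2*k*(2*k-2) := Nat.mul_pos (by omega) (by omega)
  have hmain := Nat.le_of_mul_le_mul_left hfin hpos
  have hABcard : A.card ≤ B.card :=
    le_trans hAle (Finset.card_le_card (Finset.filter_subset _ _))
  omega
end key2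

end DK

theorem Delta_k_bounds :
    (∀ k : ℕ, 1 ≤ k → ∀ n : ℕ, n ≤ 2 * k → ∀ S : Set (Fin k → ℤ),
      (∀ x ∈ S, nbrCountK S x ≤ n) →
      upperDensityK S ≤ (2 * (k : ℝ)) / (4 * (k : ℝ) - (n : ℝ))) ∧
    (∀ k : ℕ, 2 ≤ k →
      (∀ S : Set (Fin k → ℤ), (∀ x ∈ S, nbrCountK S x ≤ 1) → upperDensityK S ≤ 1 / 2) ∧
      (∀ x ∈ checkerK k, ∀ y ∈ checkerK k, ¬ IsNbrK x y) ∧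
      HasDensityK (checkerK k) (1 / 2)) := by
  classical
  constructor
  · -- general bound 2k/(4k-n)
    intro k hk n hn S hS
    apply DK.upperDensity_le_of_count S 1
    intro r hr
    have h := DK.key1 hn hS r
    have hbox1 : ((DK.boxF k (r+1)).card : ℝ) = (2*(r:ℝ)+1)^k := by
      have h2 := DK.card_boxF_real (k := k) (r := r+1) (by omega)
      have h3 : (2*((r+1:ℕ):ℝ) - 1) = 2*(r:ℝ)+1 := by push_cast; ring
      rw [h3] at h2
      exact h2
    have hcast : (((4*k-n : ℕ)):ℝ) * (((DK.boxF k r).filter (· ∈ S)).card : ℝ)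
        ≤ 2*(k:ℝ) * (2*(r:ℝ)+1)^k := by
      have h2 : (((4*k-n)*((DK.boxF k r).filter (· ∈ S)).card : ℕ) : ℝ)
          ≤ ((2*k*(DK.boxF k (r+1)).card : ℕ) : ℝ) := Nat.cast_le.mpr h
      push_cast at h2
      rw [hbox1] at h2
      exact h2
    have hM : (((4*k-n:ℕ)):ℝ) = 4*(k:ℝ) - n := by
      rw [Nat.cast_sub (by omega)]
      push_cast
      ring
    have hMpos : (0:ℝ) < 4*(k:ℝ) - n := by
      have h4 : n < 4*k := by omega
      have h5 : (n:ℝ) < 4*(k:ℝ) := by exact_mod_cast h4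
      linarith
    rw [hM] at hcast
    rw [div_mul_eq_mul_div, le_div_iff₀ hMpos]
    nlinarith [hcast]
  · intro k hk
    refine ⟨?_, DK.checker_indep, DK.checker_density (by omega)⟩
    -- degree ≤ 1 implies density ≤ 1/2
    intro S hS
    apply DK.upperDensity_le_of_count S 3
    intro r hr
    have h := DK.key2 hk hS r
    have hbox2 : ((DK.boxF k (r+2)).card : ℝ) = (2*(r:ℝ)+3)^k := by
      have h2 := DK.card_boxF_real (k := k) (r := r+2) (by omega)
      have h3 : (2*((r+2:ℕ):ℝ) - 1) = 2*(r:ℝ)+3 := by push_cast; ring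
      rw [h3] at h2
      exact h2
    have hcast : 2 * (((DK.boxF k r).filter (· ∈ S)).card : ℝ) ≤ (2*(r:ℝ)+3)^k := by
      have h2 : ((2*((DK.boxF k r).filter (· ∈ S)).card : ℕ) : ℝ)
          ≤ (((DK.boxF k (r+2)).card : ℕ) : ℝ) := Nat.cast_le.mpr h
      push_cast at h2
      rw [hbox2] at h2
      push_cast
      exact h2
    linarith
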